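/- Let Δ be a prime field and P its algebraic closure. The lattice of Galois extensions of Δ contained in P (ordered by inclusion, with meet the intersection of fields and join the compositum, i.e., the smallest subfield containing both) is a modular (Dedekind) lattice: for Galois extensions X, Y, Z of Δ in P with Y ⊆ X, one has X ∩ (Y ⊔ Z) = Y ⊔ (X ∩ Z). -/

import Mathlib

theorem subgroup_modular {G : Type*} [Group G] (a b c : Subgroup G) [a.Normal]
    (h : a ≤ b) : a ⊔ (b ⊓ c) = b ⊓ (a ⊔ c) := by
  apply SetLike.ext'
  rw [inf_comm b c, Subgroup.normal_mul, Subgroup.mul_inf_assoc a c b h,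
    Subgroup.coe_inf, Subgroup.normal_mul, Set.inter_comm]

theorem modular_of_finite (F M : Type*) [Field F] [Field M] [Algebra F M]
    [FiniteDimensional F M] [IsGalois F M]
    (X Y Z : IntermediateField F M)
    [IsGalois F X] [IsGalois F Y] [IsGalois F Z]
    (hYX : Y ≤ X) :
    X ⊓ (Y ⊔ Z) = Y ⊔ (X ⊓ Z) := by
  apply (IsGalois.intermediateFieldEquivSubgroup (F := F) (E := M)).injective
  rw [map_inf, map_sup, map_sup, map_inf]
  show X.fixingSubgroup ⊔ (Y.fixingSubgroup ⊓ Z.fixingSubgroup)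
      = Y.fixingSubgroup ⊓ (X.fixingSubgroup ⊔ Z.fixingSubgroup)
  exact subgroup_modular _ _ _
    ((IsGalois.intermediateFieldEquivSubgroup (F := F) (E := M)).le_iff_le.mpr hYX)

theorem modular_of_fd (F P : Type*) [Field F] [Field P] [Algebra F P]
    (X Y Z : IntermediateField F P)
    [FiniteDimensional F X] [FiniteDimensional F Y] [FiniteDimensional F Z]
    [IsGalois F X] [IsGalois F Y] [IsGalois F Z]
    (hYX : Y ≤ X) :
    X ⊓ (Y ⊔ Z) = Y ⊔ (X ⊓ Z) := by
  set M : IntermediateField F P := X ⊔ Y ⊔ Z with hM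
  have hXM : X ≤ M := le_sup_left.trans le_sup_left
  have hYM : Y ≤ M := le_sup_right.trans le_sup_left
  have hZM : Z ≤ M := le_sup_right
  haveI : FiniteDimensional F M := by
    haveI := IntermediateField.finiteDimensional_sup X Y
    exact IntermediateField.finiteDimensional_sup (X ⊔ Y) Z
  haveI : IsGalois F M := by
    constructor
  set X' := IntermediateField.restrict hXM with hX'
  set Y' := IntermediateField.restrict hYM with hY'
  set Z' := IntermediateField.restrict hZM with hZ'
  haveI : IsGalois F (↥(X' : IntermediateField F M)) :=
    IsGalois.of_algEquiv (E := X) (IntermediateField.restrict_algEquiv hXM)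
  haveI : IsGalois F (↥(Y' : IntermediateField F M)) :=
    IsGalois.of_algEquiv (E := Y) (IntermediateField.restrict_algEquiv hYM)
  haveI : IsGalois F (↥(Z' : IntermediateField F M)) :=
    IsGalois.of_algEquiv (E := Z) (IntermediateField.restrict_algEquiv hZM)
  have hYX' : Y' ≤ X' := by
    intro y hy
    rw [IntermediateField.mem_restrict] at hy ⊢
    exact hYX hy
  have key := modular_of_finite F M X' Y' Z' hYX'
  have hinf : ∀ A B : IntermediateField F M,
      IntermediateField.lift (A ⊓ B) = IntermediateField.lift A ⊓ IntermediateField.lift B :=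
    fun A B => IntermediateField.map_inf A B M.val
  have hsup : ∀ A B : IntermediateField F M,
      IntermediateField.lift (A ⊔ B) = IntermediateField.lift A ⊔ IntermediateField.lift B :=
    fun A B => IntermediateField.map_sup A B M.val
  have := congrArg (IntermediateField.lift (F := M)) key
  rw [hinf, hsup, hsup, hinf, IntermediateField.lift_restrict, IntermediateField.lift_restrict,
    IntermediateField.lift_restrict] at this
  exact this

namespace Paper

/-- A prime field: `ℚ` or `𝔽ₚ`. -/
def IsPrimeField (Δ : Type*) [Field Δ] : Prop :=
  Nonempty (Δ ≃+* ℚ) ∨ ∃ p : ℕ, p.Prime ∧ Nonempty (Δ ≃+* ZMod p)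


/-- the lattice of Galois extensions of a prime field `Δ` inside its
algebraic closure `P` is modular: if `Y ⊆ X` then `X ⊓ (Y ⊔ Z) = Y ⊔ (X ⊓ Z)`. -/
theorem galois_extensions_lattice_modular (Δ : Type*) [Field Δ] (hΔ : IsPrimeField Δ)
    (P : Type*) [Field P] [Algebra Δ P] [IsAlgClosure Δ P]
    (X Y Z : IntermediateField Δ P)
    [IsGalois Δ X] [IsGalois Δ Y] [IsGalois Δ Z]
    (hYX : Y ≤ X) :
    X ⊓ (Y ⊔ Z) = Y ⊔ (X ⊓ Z) := by
  haveI : PerfectField Δ := by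
    rcases hΔ with ⟨⟨e⟩⟩ | ⟨p, hp, ⟨e⟩⟩
    · haveI : CharZero Δ := ⟨fun m n h => by
        have : (m : ℚ) = (n : ℚ) := by
          rw [← map_natCast e m, ← map_natCast e n, h]
        exact_mod_cast this⟩
      infer_instance
    · haveI : NeZero p := ⟨hp.ne_zero⟩
      haveI : Finite Δ := Finite.of_equiv _ e.symm.toEquiv
      exact PerfectField.ofFinite
  haveI : Algebra.IsAlgebraic Δ P := IsAlgClosure.isAlgebraic
  refine le_antisymm ?_ (le_inf (sup_le hYX inf_le_left)
    (sup_le le_sup_left (inf_le_right.trans le_sup_right)))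
  intro x hx
  have hxX : x ∈ X := hx.1
  have hxYZ : x ∈ Y ⊔ Z := hx.2
  rw [IntermediateField.sup_def] at hxYZ
  obtain ⟨T, hT, hxT⟩ := IntermediateField.exists_finset_of_mem_adjoin hxYZ
  set Sy : Set P := {t | t ∈ T ∧ t ∈ Y} with hSy
  set Sz : Set P := {t | t ∈ T ∧ t ∈ Z} with hSz
  have hTsub : (T : Set P) ⊆ Sy ∪ Sz := fun t ht =>
    (hT ht).imp (fun h => ⟨ht, h⟩) (fun h => ⟨ht, h⟩)
  have hx2 : x ∈ IntermediateField.adjoin Δ Sy ⊔ IntermediateField.adjoin Δ Sz := by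
    rw [← IntermediateField.adjoin_union]
    exact SetLike.le_def.mp (IntermediateField.adjoin.mono _ _ _ hTsub) hxT
  have intP : ∀ y : P, IsIntegral Δ y := fun y => Algebra.IsIntegral.isIntegral y
  haveI : Finite ↥Sy := Set.Finite.to_subtype
    ((T.finite_toSet).subset (fun t ht => ht.1))
  haveI : Finite ↥Sz := Set.Finite.to_subtype
    ((T.finite_toSet).subset (fun t ht => ht.1))
  haveI : FiniteDimensional Δ (IntermediateField.adjoin Δ Sy) :=
    IntermediateField.finiteDimensional_adjoin (fun y _ => intP y)
  haveI : FiniteDimensional Δ (IntermediateField.adjoin Δ Sz) :=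
    IntermediateField.finiteDimensional_adjoin (fun y _ => intP y)
  haveI : FiniteDimensional Δ (IntermediateField.adjoin Δ {x}) :=
    IntermediateField.adjoin.finiteDimensional (intP x)
  set Y₀ : IntermediateField Δ P := IntermediateField.normalClosure Δ (IntermediateField.adjoin Δ Sy) P with hY₀def
  set Z₀ : IntermediateField Δ P := IntermediateField.normalClosure Δ (IntermediateField.adjoin Δ Sz) P with hZ₀def
  set X₀ : IntermediateField Δ P :=
    IntermediateField.normalClosure Δ (IntermediateField.adjoin Δ {x}) P ⊔ Y₀ with hX₀def
  have hY₀Y : Y₀ ≤ Y :=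
    IntermediateField.normalClosure_le_iff_of_normal.mpr
      (IntermediateField.adjoin_le_iff.mpr (fun t ht => ht.2))
  have hZ₀Z : Z₀ ≤ Z :=
    IntermediateField.normalClosure_le_iff_of_normal.mpr
      (IntermediateField.adjoin_le_iff.mpr (fun t ht => ht.2))
  have hX₀X : X₀ ≤ X := sup_le
    (IntermediateField.normalClosure_le_iff_of_normal.mpr
      (IntermediateField.adjoin_le_iff.mpr (Set.singleton_subset_iff.mpr hxX))) (hY₀Y.trans hYX)
  haveI : FiniteDimensional Δ X₀ := IntermediateField.finiteDimensional_sup _ _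
  haveI : IsGalois Δ Y₀ := ⟨⟩
  haveI : IsGalois Δ Z₀ := ⟨⟩
  haveI : IsGalois Δ X₀ := ⟨⟩
  have hxX₀ : x ∈ X₀ := SetLike.le_def.mp
    ((IntermediateField.le_normalClosure (IntermediateField.adjoin Δ {x})).trans le_sup_left)
    (IntermediateField.subset_adjoin Δ {x} rfl)
  have hxYZ₀ : x ∈ Y₀ ⊔ Z₀ :=
    SetLike.le_def.mp (sup_le_sup (IntermediateField.le_normalClosure _)
      (IntermediateField.le_normalClosure _)) hx2
  have key := modular_of_fd Δ P X₀ Y₀ Z₀ le_sup_right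
  have hxkey : x ∈ Y₀ ⊔ (X₀ ⊓ Z₀) := key ▸ (⟨hxX₀, hxYZ₀⟩ : x ∈ X₀ ⊓ (Y₀ ⊔ Z₀))
  exact SetLike.le_def.mp (sup_le_sup hY₀Y (inf_le_inf hX₀X hZ₀Z)) hxkey

end Paper
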